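/- arXiv:2101.00227 — 3 statements merged into one kernel-verified Lean document; each statement's English description precedes it below -/
import Mathlib

section
/- For every integer x \ge 0, x^9 = \sum_{k=1}^{x} (630 k^4 (x-k)^4 - 120 k (x-k) + 1). -/
open Finset

private lemma pow_sum_aux (j : ℕ) (c : ℤ) (p : ℤ → ℤ)
    (h0 : p 0 = 0) (hstep : ∀ y : ℤ, p (y+1) - p y = c * (y+1)^j) :
    ∀ n : ℕ, c * ∑ k ∈ Finset.Icc (1:ℤ) (n:ℤ), k^j = p n := by
  intro n
  induction n with
  | zero => simpa using h0.symm
  | succ m ih =>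
    push_cast
    have hins : Finset.Icc (1:ℤ) ((m:ℤ)+1) = insert ((m:ℤ)+1) (Finset.Icc (1:ℤ) (m:ℤ)) := by
      ext a; simp only [Finset.mem_Icc, Finset.mem_insert]; omega
    rw [hins, Finset.sum_insert (by simp)]
    linear_combination ih - hstep (m:ℤ)

theorem stmt_3 (x : ℤ) (hx : 0 ≤ x) :
    x^9 = ∑ k ∈ Finset.Icc (1:ℤ) x, (630*k^4*(x-k)^4 - 120*k*(x-k) + 1) := by
  obtain ⟨n, rfl⟩ : ∃ n : ℕ, x = (n:ℤ) := ⟨x.toNat, (Int.toNat_of_nonneg hx).symm⟩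
  set x : ℤ := (n:ℤ) with hxdef
  have h1 := pow_sum_aux 1 2 (fun y => y^2 + y) (by norm_num) (fun y => by ring) n
  have h2 := pow_sum_aux 2 6 (fun y => 2*y^3 + 3*y^2 + y) (by norm_num) (fun y => by ring) n
  have h4 := pow_sum_aux 4 30 (fun y => 6*y^5 + 15*y^4 + 10*y^3 - y) (by norm_num) (fun y => by ring) n
  have h5 := pow_sum_aux 5 12 (fun y => 2*y^6 + 6*y^5 + 5*y^4 - y^2) (by norm_num) (fun y => by ring) n
  have h6 := pow_sum_aux 6 42 (fun y => 6*y^7 + 21*y^6 + 21*y^5 - 7*y^3 + y) (by norm_num) (fun y => by ring) n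
  have h7 := pow_sum_aux 7 24 (fun y => 3*y^8 + 12*y^7 + 14*y^6 - 7*y^4 + 2*y^2) (by norm_num) (fun y => by ring) n
  have h8 := pow_sum_aux 8 90 (fun y => 10*y^9 + 45*y^8 + 60*y^7 - 42*y^5 + 20*y^3 - 3*y) (by norm_num) (fun y => by ring) n
  have hc : ∑ k ∈ Finset.Icc (1:ℤ) x, (1:ℤ) = x := by
    simp [Int.card_Icc, hxdef]
  have expand : ∑ k ∈ Finset.Icc (1:ℤ) x, (630*k^4*(x-k)^4 - 120*k*(x-k) + 1)
      = 630*x^4*(∑ k ∈ Finset.Icc (1:ℤ) x, k^4)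
        - 2520*x^3*(∑ k ∈ Finset.Icc (1:ℤ) x, k^5)
        + 3780*x^2*(∑ k ∈ Finset.Icc (1:ℤ) x, k^6)
        - 2520*x*(∑ k ∈ Finset.Icc (1:ℤ) x, k^7)
        + 630*(∑ k ∈ Finset.Icc (1:ℤ) x, k^8)
        - 120*x*(∑ k ∈ Finset.Icc (1:ℤ) x, k^1)
        + 120*(∑ k ∈ Finset.Icc (1:ℤ) x, k^2)
        + (∑ k ∈ Finset.Icc (1:ℤ) x, (1:ℤ)) := by
    simp only [Finset.mul_sum, ← Finset.sum_add_distrib, ← Finset.sum_sub_distrib]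
    exact Finset.sum_congr rfl (fun k _ => by ring)
  simp only [pow_one] at expand h1
  rw [expand, hc]
  linear_combination -(21*x^4*h4 - 210*x^3*h5 + 90*x^2*h6 - 105*x*h7 + 7*h8 - 60*x*h1 + 20*h2)
end

section
/- For every integer x \ge 0, x^{11} = \sum_{k=1}^{x} (2772 k^5 (x-k)^5 + 660 k^2 (x-k)^2 - 1386 k (x-k) + 1). -/
lemma icc_step (f : ℤ → ℤ) (x : ℤ) (hx : 0 ≤ x) :
    ∑ k ∈ Finset.Icc 1 (x+1), f k = (∑ k ∈ Finset.Icc 1 x, f k) + f (x+1) := by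
  have h : Finset.Icc (1:ℤ) (x+1) = insert (x+1) (Finset.Icc 1 x) := by
    ext k; simp; omega
  rw [h, Finset.sum_insert (by simp), add_comm]

lemma icc_base (f : ℤ → ℤ) : ∑ k ∈ Finset.Icc (1:ℤ) 0, f k = 0 := by
  rw [show Finset.Icc (1:ℤ) 0 = ∅ from Finset.Icc_eq_empty (by omega)]; simp

lemma S0 : ∀ x : ℤ, 0 ≤ x → ∑ k ∈ Finset.Icc (1:ℤ) x, (1:ℤ) = x := by
  refine Int.le_induction ?_ ?_
  · rw [icc_base]
  · intro n hn ih; rw [icc_step _ _ hn]; linear_combination ih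

lemma S1 : ∀ x : ℤ, 0 ≤ x → 2 * ∑ k ∈ Finset.Icc (1:ℤ) x, k = x^2 + x := by
  refine Int.le_induction ?_ ?_
  · rw [icc_base]; ring
  · intro n hn ih; rw [icc_step _ _ hn]; linear_combination ih

lemma S2 : ∀ x : ℤ, 0 ≤ x → 6 * ∑ k ∈ Finset.Icc (1:ℤ) x, k^2 = 2*x^3+3*x^2+x := by
  refine Int.le_induction ?_ ?_
  · rw [icc_base]; ring
  · intro n hn ih; rw [icc_step _ _ hn]; linear_combination ih

lemma S3 : ∀ x : ℤ, 0 ≤ x → 4 * ∑ k ∈ Finset.Icc (1:ℤ) x, k^3 = x^4+2*x^3+x^2 := by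
  refine Int.le_induction ?_ ?_
  · rw [icc_base]; ring
  · intro n hn ih; rw [icc_step _ _ hn]; linear_combination ih

lemma S4 : ∀ x : ℤ, 0 ≤ x → 30 * ∑ k ∈ Finset.Icc (1:ℤ) x, k^4 = 6*x^5+15*x^4+10*x^3-x := by
  refine Int.le_induction ?_ ?_
  · rw [icc_base]; ring
  · intro n hn ih; rw [icc_step _ _ hn]; linear_combination ih

lemma S5 : ∀ x : ℤ, 0 ≤ x → 12 * ∑ k ∈ Finset.Icc (1:ℤ) x, k^5 = 2*x^6+6*x^5+5*x^4-x^2 := by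
  refine Int.le_induction ?_ ?_
  · rw [icc_base]; ring
  · intro n hn ih; rw [icc_step _ _ hn]; linear_combination ih

lemma S6 : ∀ x : ℤ, 0 ≤ x → 42 * ∑ k ∈ Finset.Icc (1:ℤ) x, k^6 = 6*x^7+21*x^6+21*x^5-7*x^3+x := by
  refine Int.le_induction ?_ ?_
  · rw [icc_base]; ring
  · intro n hn ih; rw [icc_step _ _ hn]; linear_combination ih

lemma S7 : ∀ x : ℤ, 0 ≤ x → 24 * ∑ k ∈ Finset.Icc (1:ℤ) x, k^7 = 3*x^8+12*x^7+14*x^6-7*x^4+2*x^2 := by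
  refine Int.le_induction ?_ ?_
  · rw [icc_base]; ring
  · intro n hn ih; rw [icc_step _ _ hn]; linear_combination ih

lemma S8 : ∀ x : ℤ, 0 ≤ x → 90 * ∑ k ∈ Finset.Icc (1:ℤ) x, k^8 = 10*x^9+45*x^8+60*x^7-42*x^5+20*x^3-3*x := by
  refine Int.le_induction ?_ ?_
  · rw [icc_base]; ring
  · intro n hn ih; rw [icc_step _ _ hn]; linear_combination ih

lemma S9 : ∀ x : ℤ, 0 ≤ x → 20 * ∑ k ∈ Finset.Icc (1:ℤ) x, k^9 = 2*x^10+10*x^9+15*x^8-14*x^6+10*x^4-3*x^2 := by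
  refine Int.le_induction ?_ ?_
  · rw [icc_base]; ring
  · intro n hn ih; rw [icc_step _ _ hn]; linear_combination ih

lemma S10 : ∀ x : ℤ, 0 ≤ x → 66 * ∑ k ∈ Finset.Icc (1:ℤ) x, k^10 = 6*x^11+33*x^10+55*x^9-66*x^7+66*x^5-33*x^3+5*x := by
  refine Int.le_induction ?_ ?_
  · rw [icc_base]; ring
  · intro n hn ih; rw [icc_step _ _ hn]; linear_combination ih

theorem stmt_4 (x : ℤ) (hx : 0 ≤ x) :
    x^11 = ∑ k ∈ Finset.Icc (1:ℤ) x,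
      (2772*k^5*(x-k)^5 + 660*k^2*(x-k)^2 - 1386*k*(x-k) + 1) := by
  have expand : ∑ k ∈ Finset.Icc (1:ℤ) x,
      (2772*k^5*(x-k)^5 + 660*k^2*(x-k)^2 - 1386*k*(x-k) + 1)
      = (2772*x^5) * (∑ k ∈ Finset.Icc (1:ℤ) x, k^5)
        + ((-13860)*x^4) * (∑ k ∈ Finset.Icc (1:ℤ) x, k^6)
        + (27720*x^3) * (∑ k ∈ Finset.Icc (1:ℤ) x, k^7)
        + ((-27720)*x^2) * (∑ k ∈ Finset.Icc (1:ℤ) x, k^8)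
        + (13860*x) * (∑ k ∈ Finset.Icc (1:ℤ) x, k^9)
        + (-2772) * (∑ k ∈ Finset.Icc (1:ℤ) x, k^10)
        + (660*x^2+1386) * (∑ k ∈ Finset.Icc (1:ℤ) x, k^2)
        + ((-1320)*x) * (∑ k ∈ Finset.Icc (1:ℤ) x, k^3)
        + 660 * (∑ k ∈ Finset.Icc (1:ℤ) x, k^4)
        + ((-1386)*x) * (∑ k ∈ Finset.Icc (1:ℤ) x, k)
        + (∑ k ∈ Finset.Icc (1:ℤ) x, (1:ℤ)) := by
    simp only [Finset.mul_sum, ← Finset.sum_add_distrib]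
    exact Finset.sum_congr rfl fun k _ => by ring
  rw [expand]
  have h0 := S0 x hx
  have h1 := S1 x hx
  have h2 := S2 x hx
  have h3 := S3 x hx
  have h4 := S4 x hx
  have h5 := S5 x hx
  have h6 := S6 x hx
  have h7 := S7 x hx
  have h8 := S8 x hx
  have h9 := S9 x hx
  have h10 := S10 x hx
  linear_combination -(231*x^5*h5 - 330*x^4*h6 + 1155*x^3*h7 - 308*x^2*h8 + 693*x*h9
    - 42*h10 + (110*x^2+231)*h2 - 330*x*h3 + 22*h4 - 693*x*h1 + h0)
end

section
/- If real numbers A_0, A_1, A_2 satisfy x^5 = \sum_{k=1}^{x} (A_2 k^2(x-k)^2 + A_1 k(x-k) + A_0) for all natural numbers x \ge 1, then A_2 = 30, A_1 = 0, and A_0 = 1. -/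
theorem stmt_11 (A₀ A₁ A₂ : ℝ)
    (h : ∀ x : ℕ, 1 ≤ x →
      (x:ℝ)^5 = ∑ k ∈ Finset.Icc 1 x,
        (A₂ * (k:ℝ)^2 * ((x:ℝ) - (k:ℝ))^2 + A₁ * (k:ℝ) * ((x:ℝ) - (k:ℝ)) + A₀)) :
    A₂ = 30 ∧ A₁ = 0 ∧ A₀ = 1 := by
  have h1 := h 1 (by norm_num)
  have h2 := h 2 (by norm_num)
  have h3 := h 3 (by norm_num)
  rw [show Finset.Icc 1 1 = {1} by decide] at h1
  rw [show Finset.Icc 1 2 = {1, 2} by decide] at h2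
  rw [show Finset.Icc 1 3 = {1, 2, 3} by decide] at h3
  norm_num [Finset.sum_insert, Finset.sum_singleton] at h1 h2 h3
  refine ⟨by linarith, by linarith, by linarith⟩
end
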